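/- arXiv:2212.09604 — 4 statements merged into one kernel-verified Lean document; each statement's English description precedes it below -/
import Mathlib

section
/- Let p > 0 be an integer. Then σ̂(p, p+1) = σ(p, p+1) + (p − 2) if p is even, and σ̂(p, p+1) = σ(p, p+1) if p is odd. -/
/-- Number of integer pairs `(i, j)` with `0 < i < p`, `0 < j < q` and
`t < i/p + j/q < t + 1` (Litherland's lattice-point count). -/
noncomputable def latticeCount (p q : ℕ) (t : ℝ) : ℕ :=
  Set.ncard {ij : ℕ × ℕ | 0 < ij.1 ∧ ij.1 < p ∧ 0 < ij.2 ∧ ij.2 < q ∧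
    t < (ij.1 : ℝ) / p + (ij.2 : ℝ) / q ∧ (ij.1 : ℝ) / p + (ij.2 : ℝ) / q < t + 1}

/-- The Levine–Tristram signature of the torus knot `T(p,q)` at `e^{2πit}`,
via Litherland's formula: `σ_t(p,q) = 2 N_t(p,q) − (p−1)(q−1)`. -/
noncomputable def sigmaT (p q : ℕ) (t : ℝ) : ℤ :=
  2 * (latticeCount p q t : ℤ) - ((p : ℤ) - 1) * ((q : ℤ) - 1)

/-- The maximum signature `σ̂(p,q) = sup_{t ∈ (0,1)} σ_t(p,q)`. -/
noncomputable def sigmaMax (p q : ℕ) : ℤ :=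
  sSup (sigmaT p q '' Set.Ioo (0 : ℝ) 1)

/-- The classical signature `σ(p,q) = σ_{1/2}(p,q)`. -/
noncomputable def sigmaClassical (p q : ℕ) : ℤ :=
  sigmaT p q (1 / 2)


namespace TorusAux

/-- The grid of lattice points. -/
def grid (p : ℕ) : Finset (ℕ × ℕ) := Finset.Ico 1 p ×ˢ Finset.Ico 1 (p+1)

noncomputable def vv (p : ℕ) (ij : ℕ × ℕ) : ℝ := (ij.1 : ℝ) / p + (ij.2 : ℝ) / ((p : ℝ) + 1)

open Classical in
noncomputable def win (p : ℕ) (t : ℝ) : Finset (ℕ × ℕ) :=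
  (grid p).filter fun ij => t < vv p ij ∧ vv p ij < t + 1

open Classical in
noncomputable def cmpl (p : ℕ) (t : ℝ) : Finset (ℕ × ℕ) :=
  (grid p).filter fun ij => vv p ij ≤ t ∨ t + 1 ≤ vv p ij

lemma mem_grid {p : ℕ} {ij : ℕ × ℕ} :
    ij ∈ grid p ↔ 1 ≤ ij.1 ∧ ij.1 < p ∧ 1 ≤ ij.2 ∧ ij.2 ≤ p := by
  simp [grid, Finset.mem_Ico]
  omega

lemma latticeCount_eq (p : ℕ) (t : ℝ) : latticeCount p (p+1) t = (win p t).card := by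
  rw [latticeCount]
  have h : {ij : ℕ × ℕ | 0 < ij.1 ∧ ij.1 < p ∧ 0 < ij.2 ∧ ij.2 < p+1 ∧
      t < (ij.1 : ℝ) / p + (ij.2 : ℝ) / (↑(p+1)) ∧
      (ij.1 : ℝ) / p + (ij.2 : ℝ) / (↑(p+1)) < t + 1} = ↑(win p t) := by
    ext ⟨i, j⟩
    rw [Finset.mem_coe, win, Finset.mem_filter]
    simp only [Set.mem_setOf_eq, win, Finset.mem_coe, Finset.mem_filter, mem_grid, vv]
    push_cast
    constructor
    · rintro ⟨h1, h2, h3, h4, h5, h6⟩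
      exact ⟨⟨h1, h2, h3, by omega⟩, h5, h6⟩
    · rintro ⟨⟨h1, h2, h3, h4⟩, h5, h6⟩
      exact ⟨h1, h2, h3, by omega, h5, h6⟩
  rw [h, Set.ncard_coe_finset]

lemma card_win_add_cmpl (p : ℕ) (t : ℝ) :
    (win p t).card + (cmpl p t).card = (p - 1) * p := by
  classical
  have h : cmpl p t = (grid p).filter fun ij => ¬(t < vv p ij ∧ vv p ij < t + 1) := by
    apply Finset.filter_congr
    intro ij _
    constructor
    · rintro (h | h) ⟨h1, h2⟩ <;> linarith
    · intro h
      by_cases h1 : t < vv p ij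
      · right; by_contra h2; exact h ⟨h1, by linarith⟩
      · left; linarith
  rw [win, h, Finset.card_filter_add_card_filter_not]
  simp [grid, Nat.card_Ico]


def nn (p : ℕ) (ij : ℕ × ℕ) : ℕ := ij.1 * (p+1) + ij.2 * p

lemma nn_eq (p : ℕ) (i j : ℕ) : nn p (i, j) = (i + j) * p + i := by
  simp [nn]; ring

lemma vv_eq_nn (p : ℕ) (hp : 0 < p) (ij : ℕ × ℕ) :
    vv p ij = (nn p ij : ℝ) / ((p * (p+1) : ℕ) : ℝ) := by
  have h0 : (p : ℝ) ≠ 0 := Nat.cast_ne_zero.mpr hp.ne'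
  have h1 : (p : ℝ) + 1 ≠ 0 := by positivity
  rw [vv, nn]
  push_cast
  field_simp
  try ring

lemma vv_shift (p : ℕ) (hp : 0 < p) (a b i j : ℕ) (hab : a + b = p + 1) :
    vv p (i, j) + 1 ≤ vv p (i + a, j + b) := by
  have h0 : (0 : ℝ) < p := by exact_mod_cast hp
  have h1 : (0 : ℝ) < (p : ℝ) + 1 := by positivity
  have hb : (b : ℝ) = (p : ℝ) + 1 - a := by
    have : (a : ℝ) + b = (p : ℝ) + 1 := by exact_mod_cast hab
    linarith
  have key : vv p (i + a, j + b) = vv p (i, j) + 1 + (a : ℝ) / (p * ((p : ℝ) + 1)) := by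
    simp only [vv]
    push_cast
    rw [hb]
    field_simp
    ring
  have hnn : (0 : ℝ) ≤ (a : ℝ) / (p * ((p : ℝ) + 1)) := by positivity
  linarith

/- nat key lemmas -/
lemma keyA {p c i j : ℕ} (hi1 : 1 ≤ i) (hi2 : i < p) :
    (i+j) * p + i < c * p ↔ i + j < c := by
  constructor
  · intro h
    by_contra hc
    push_neg at hc
    have h2 := Nat.mul_le_mul_right p hc
    linarith
  · intro h
    have h2 := Nat.mul_le_mul_right p (show i + j + 1 ≤ c by omega)
    have h3 : (i+j+1) * p = (i+j)*p + p := by ring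
    linarith

lemma keyB {p c i j : ℕ} (hi2 : i < p) :
    c * p ≤ (i+j) * p + i ↔ c ≤ i + j := by
  constructor
  · intro h
    by_contra hc
    push_neg at hc
    have h2 := Nat.mul_le_mul_right p (show i + j + 1 ≤ c by omega)
    have h3 : (i+j+1) * p = (i+j)*p + p := by ring
    linarith
  · intro h
    have h2 := Nat.mul_le_mul_right p h
    linarith

lemma keyC {p c i j : ℕ} (hi1 : 1 ≤ i) (hi2 : i < p) :
    (i+j) * p + i ≤ c * p ↔ i + j < c := by
  constructor
  · intro h
    by_contra hc
    push_neg at hc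
    have h2 := Nat.mul_le_mul_right p hc
    linarith
  · intro h
    exact le_of_lt ((keyA hi1 hi2).mpr h)

lemma keyD {p a i j : ℕ} (hi1 : 1 ≤ i) (hi2 : i < p) (hj1 : 1 ≤ j) (ha : a ≤ p) :
    (i+j) * p + i ≤ a * p + a ↔ i + j ≤ a := by
  constructor
  · intro h
    by_contra hc
    push_neg at hc
    have h2 := Nat.mul_le_mul_right p (show a + 1 ≤ i + j from hc)
    have h3 : (a+1) * p = a*p + p := by ring
    linarith
  · intro h
    have h2 := Nat.mul_le_mul_right p h
    omega

lemma keyE {p a i j : ℕ} (hi1 : 1 ≤ i) (hi2 : i < p) (hj1 : 1 ≤ j) (hj2 : j ≤ p)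
    (ha : a ≤ p) :
    (a+p+1) * p + a ≤ (i+j) * p + i ↔
      (a+p+2 ≤ i+j ∨ (i+j = a+p+1 ∧ a ≤ i)) := by
  constructor
  · intro h
    by_cases h1 : i + j ≤ a + p
    · exfalso
      have h2 := Nat.mul_le_mul_right p h1
      have h3 : (a+p+1) * p = (a+p)*p + p := by ring
      linarith
    · by_cases h2 : i + j = a + p + 1
      · right
        refine ⟨h2, ?_⟩
        have h3 : (i+j) * p = (a+p+1) * p := by rw [h2]
        omega
      · left; omega
  · rintro (h | ⟨h1, h2⟩)
    · have h2 := Nat.mul_le_mul_right p h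
      have h3 : (a+p+2) * p = (a+p+1)*p + p := by ring
      omega
    · have h3 : (i+j) * p = (a+p+1) * p := by rw [h1]
      omega


noncomputable def tstar (p : ℕ) : ℝ :=
  (2 * (((p/2 + 1) * p : ℕ) : ℝ) - 1) / (2 * ((p * (p+1) : ℕ) : ℝ))

lemma Dpos (p : ℕ) (hp : 0 < p) : (0:ℝ) < ((p * (p+1) : ℕ) : ℝ) := by
  have : 0 < p * (p+1) := by positivity
  exact_mod_cast this

lemma vv_le_tstar_iff (p : ℕ) (hp : 0 < p) (ij : ℕ × ℕ) :
    vv p ij ≤ tstar p ↔ nn p ij < (p/2 + 1) * p := by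
  have hD := Dpos p hp
  rw [vv_eq_nn p hp, tstar, div_le_div_iff₀ hD (by linarith)]
  constructor
  · intro h
    by_contra hc
    push_neg at hc
    have hc' : (((p/2+1) * p : ℕ) : ℝ) ≤ (nn p ij : ℝ) := by exact_mod_cast hc
    nlinarith
  · intro h
    have h' : (nn p ij : ℝ) + 1 ≤ (((p/2+1) * p : ℕ) : ℝ) := by exact_mod_cast h
    nlinarith

lemma tstar_add_one_le_iff (p : ℕ) (hp : 0 < p) (ij : ℕ × ℕ) :
    tstar p + 1 ≤ vv p ij ↔ (p/2 + 1) * p + p * (p+1) ≤ nn p ij := by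
  have hD := Dpos p hp
  have ht : tstar p + 1 =
      (2 * (((p/2 + 1) * p : ℕ) : ℝ) - 1 + 2 * ((p * (p+1) : ℕ) : ℝ)) /
        (2 * ((p * (p+1) : ℕ) : ℝ)) := by
    rw [tstar]
    field_simp
  rw [vv_eq_nn p hp, ht, div_le_div_iff₀ (by linarith) hD]
  constructor
  · intro h
    by_contra hc
    push_neg at hc
    have hc' : (nn p ij : ℝ) + 1 ≤ (((p/2+1) * p : ℕ) : ℝ) + ((p * (p+1) : ℕ) : ℝ) := by
      exact_mod_cast hc
    nlinarith
  · intro h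
    have h' : (((p/2+1) * p : ℕ) : ℝ) + ((p * (p+1) : ℕ) : ℝ) ≤ (nn p ij : ℝ) := by
      exact_mod_cast h
    nlinarith

lemma vv_le_half_iff (p : ℕ) (hp : 0 < p) (ij : ℕ × ℕ) :
    vv p ij ≤ 1/2 ↔ 2 * nn p ij ≤ p * (p+1) := by
  have hD := Dpos p hp
  rw [vv_eq_nn p hp, div_le_div_iff₀ hD (by norm_num : (0:ℝ) < 2),
    show (1:ℝ) * ((p * (p+1) : ℕ) : ℝ) = ((p * (p+1) : ℕ) : ℝ) by ring,
    show ((nn p ij : ℕ) : ℝ) * 2 = ((2 * nn p ij : ℕ) : ℝ) by push_cast; ring]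
  exact Nat.cast_le

lemma half_add_one_le_iff (p : ℕ) (hp : 0 < p) (ij : ℕ × ℕ) :
    (1/2 : ℝ) + 1 ≤ vv p ij ↔ 3 * (p * (p+1)) ≤ 2 * nn p ij := by
  have hD := Dpos p hp
  have h32 : (1/2 : ℝ) + 1 = 3/2 := by norm_num
  rw [vv_eq_nn p hp, h32, div_le_div_iff₀ (by norm_num : (0:ℝ) < 2) hD,
    show (3:ℝ) * ((p * (p+1) : ℕ) : ℝ) = ((3 * (p * (p+1)) : ℕ) : ℝ) by push_cast; ring,
    show ((nn p ij : ℕ) : ℝ) * 2 = ((2 * nn p ij : ℕ) : ℝ) by push_cast; ring]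
  exact Nat.cast_le

lemma two_mul_le_iff (X Y : ℕ) : 2*X ≤ 2*Y ↔ X ≤ Y := by omega

lemma char_tstar (p : ℕ) (hp : 0 < p) (i j : ℕ) (hi1 : 1 ≤ i) (hi2 : i < p)
    (hj1 : 1 ≤ j) (hj2 : j ≤ p) :
    (vv p (i,j) ≤ tstar p ∨ tstar p + 1 ≤ vv p (i,j)) ↔
      (i + j ≤ p/2 ∨ p/2 + p + 2 ≤ i + j) := by
  rw [vv_le_tstar_iff p hp, tstar_add_one_le_iff p hp, nn_eq,
    show (p/2+1) * p + p * (p+1) = (p/2+p+2) * p by ring,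
    keyA hi1 hi2, keyB hi2]
  omega

lemma char_half_odd (p a : ℕ) (hp : 0 < p) (ho : p = 2*a + 1) (i j : ℕ)
    (hi1 : 1 ≤ i) (hi2 : i < p) (hj1 : 1 ≤ j) (hj2 : j ≤ p) :
    (vv p (i,j) ≤ 1/2 ∨ (1/2 : ℝ) + 1 ≤ vv p (i,j)) ↔
      (i + j ≤ a ∨ a + p + 2 ≤ i + j) := by
  rw [vv_le_half_iff p hp, half_add_one_le_iff p hp, nn_eq,
    show 3 * (p * (p+1)) = 2*((3*(a+1)) * p) by subst ho; ring,
    show p * (p+1) = 2*((a+1) * p) by subst ho; ring,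
    two_mul_le_iff, two_mul_le_iff, keyC hi1 hi2, keyB hi2]
  omega

lemma char_half_even (p a : ℕ) (hp : 0 < p) (he : p = 2*a) (i j : ℕ)
    (hi1 : 1 ≤ i) (hi2 : i < p) (hj1 : 1 ≤ j) (hj2 : j ≤ p) :
    (vv p (i,j) ≤ 1/2 ∨ (1/2 : ℝ) + 1 ≤ vv p (i,j)) ↔
      (i + j ≤ a ∨ (a + p + 2 ≤ i + j ∨ (i + j = a + p + 1 ∧ a ≤ i))) := by
  have ha : a ≤ p := by omega
  rw [vv_le_half_iff p hp, half_add_one_le_iff p hp, nn_eq,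
    show 3 * (p * (p+1)) = 2*((a+p+1) * p + a) by subst he; ring,
    show p * (p+1) = 2*(a * p + a) by subst he; ring,
    two_mul_le_iff, two_mul_le_iff, keyD hi1 hi2 hj1 ha, keyE hi1 hi2 hj1 hj2 ha]


def Ebound (p : ℕ) : ℕ := (p - p/2 - 1) * (p/2 - 1)

def idx (p : ℕ) : Finset (ℕ × ℕ) := Finset.Ico 1 (p - p/2) ×ˢ Finset.Ico 1 (p/2)

lemma card_idx (p : ℕ) : (idx p).card = Ebound p := by
  simp [idx, Ebound, Nat.card_Ico]

lemma card_cmpl_ge (p : ℕ) (hp : 0 < p) (t : ℝ) : Ebound p ≤ (cmpl p t).card := by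
  classical
  rw [← card_idx p]
  apply Finset.card_le_card_of_injOn
    (fun ij => if vv p ij ≤ t then ij else (ij.1 + p/2, ij.2 + (p+1-p/2)))
  · rintro ⟨i, j⟩ hmem
    simp only [Finset.mem_coe, idx, Finset.mem_product, Finset.mem_Ico] at hmem
    obtain ⟨⟨hi1, hi2⟩, hj1, hj2⟩ := hmem
    by_cases hv : vv p (i, j) ≤ t
    · simp only [if_pos hv]
      rw [cmpl, Finset.mem_coe, Finset.mem_filter, mem_grid]
      exact ⟨⟨by omega, by omega, by omega, by omega⟩, Or.inl hv⟩
    · simp only [if_neg hv]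
      rw [cmpl, Finset.mem_coe, Finset.mem_filter, mem_grid]
      refine ⟨⟨by omega, by omega, by omega, by omega⟩, Or.inr ?_⟩
      have hsh := vv_shift p hp (p/2) (p+1-p/2) i j (by omega)
      push_neg at hv
      linarith
  · rintro ⟨i, j⟩ hm ⟨i', j'⟩ hm' heq
    simp only [Finset.mem_coe, idx, Finset.mem_product, Finset.mem_Ico] at hm hm'
    simp only at heq
    split_ifs at heq with h1 h2 h2 <;>
      simp only [Prod.mk.injEq] at heq ⊢ <;> omega

lemma cmpl_tstar_eq (p : ℕ) (hp : 0 < p) :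
    cmpl p (tstar p) = (grid p).filter
      (fun ij => ij.1 + ij.2 ≤ p/2 ∨ p/2 + p + 2 ≤ ij.1 + ij.2) := by
  classical
  rw [cmpl]
  apply Finset.filter_congr
  rintro ⟨i, j⟩ hij
  rw [mem_grid] at hij
  exact char_tstar p hp i j hij.1 hij.2.1 hij.2.2.1 hij.2.2.2

lemma card_cmpl_tstar_le (p : ℕ) (hp : 0 < p) : (cmpl p (tstar p)).card ≤ Ebound p := by
  classical
  rw [cmpl_tstar_eq p hp, ← card_idx p]
  apply Finset.card_le_card_of_injOn
    (fun ij => if ij.1 + ij.2 ≤ p/2 then ij else (ij.1 - p/2, ij.2 - (p+1-p/2)))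
  · rintro ⟨i, j⟩ hm
    simp only [Finset.mem_coe, Finset.mem_filter, mem_grid] at hm
    obtain ⟨⟨hi1, hi2, hj1, hj2⟩, hor⟩ := hm
    by_cases hc : i + j ≤ p/2
    · simp only [if_pos hc, Finset.mem_coe, idx, Finset.mem_product, Finset.mem_Ico]
      omega
    · simp only [if_neg hc, Finset.mem_coe, idx, Finset.mem_product, Finset.mem_Ico]
      omega
  · rintro ⟨i, j⟩ hm ⟨i', j'⟩ hm' heq
    simp only [Finset.mem_coe, Finset.mem_filter, mem_grid] at hm hm'
    simp only at heq
    split_ifs at heq with h1 h2 h2 <;>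
      simp only [Prod.mk.injEq] at heq ⊢ <;> omega

lemma card_cmpl_tstar (p : ℕ) (hp : 0 < p) : (cmpl p (tstar p)).card = Ebound p :=
  le_antisymm (card_cmpl_tstar_le p hp) (card_cmpl_ge p hp (tstar p))

lemma card_cmpl_half_odd (p a : ℕ) (hp : 0 < p) (ho : p = 2*a + 1) :
    (cmpl p (1/2)).card = Ebound p := by
  classical
  have h1 : cmpl p (1/2) = cmpl p (tstar p) := by
    rw [cmpl_tstar_eq p hp, cmpl]
    apply Finset.filter_congr
    rintro ⟨i, j⟩ hij
    rw [mem_grid] at hij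
    rw [char_half_odd p a hp ho i j hij.1 hij.2.1 hij.2.2.1 hij.2.2.2]
    omega
  rw [h1, card_cmpl_tstar p hp]

lemma card_cmpl_half_even (p a : ℕ) (hp : 0 < p) (he : p = 2*a) :
    (cmpl p (1/2)).card = a * (a - 1) := by
  classical
  have hchar : cmpl p (1/2) = (grid p).filter
      (fun ij => ij.1 + ij.2 ≤ a ∨ (a + p + 2 ≤ ij.1 + ij.2 ∨
        (ij.1 + ij.2 = a + p + 1 ∧ a ≤ ij.1))) := by
    rw [cmpl]
    apply Finset.filter_congr
    rintro ⟨i, j⟩ hij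
    rw [mem_grid] at hij
    exact char_half_even p a hp he i j hij.1 hij.2.1 hij.2.2.1 hij.2.2.2
  have hcard : (Finset.Ico 1 a ×ˢ Finset.Ico 1 (a+1)).card = a * (a - 1) := by
    simp [Nat.card_Ico, Nat.mul_comm]
  rw [hchar, ← hcard]
  apply Finset.card_nbij'
    (i := fun ij => if ij.1 + ij.2 ≤ a then ij
      else if ij.1 + ij.2 = a + p + 1 then (ij.1 - a, a) else (ij.1 - a, ij.2 - (a+1)))
    (j := fun xy => if xy.2 = a then (xy.1 + a, p + 1 - xy.1)
      else if xy.1 + xy.2 ≤ a then xy else (xy.1 + a, xy.2 + (a+1)))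
  · rintro ⟨i, j⟩ hm
    simp only [Finset.mem_coe, Finset.mem_filter, mem_grid] at hm
    simp only [Finset.mem_coe, Finset.mem_product, Finset.mem_Ico]
    split_ifs <;> omega
  · rintro ⟨x, y⟩ hm
    simp only [Finset.mem_coe, Finset.mem_product, Finset.mem_Ico] at hm
    simp only [Finset.mem_coe, Finset.mem_filter, mem_grid]
    split_ifs <;> omega
  · rintro ⟨i, j⟩ hm
    simp only [Finset.mem_coe, Finset.mem_filter, mem_grid] at hm
    simp only
    split_ifs <;> simp only [Prod.mk.injEq] <;> omega
  · rintro ⟨x, y⟩ hm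
    simp only [Finset.mem_coe, Finset.mem_product, Finset.mem_Ico] at hm
    simp only
    split_ifs <;> simp only [Prod.mk.injEq] <;> omega

end TorusAux
namespace TorusAux

lemma sigmaT_eq_card (p : ℕ) (hp : 0 < p) (t : ℝ) :
    sigmaT p (p+1) t = 2 * ((win p t).card : ℤ) - (((p-1) * p : ℕ) : ℤ) := by
  rw [sigmaT, latticeCount_eq]
  have h1 : (1 : ℕ) ≤ p := hp
  push_cast [Nat.cast_sub h1]
  ring

lemma tstar_mem (p : ℕ) (hp : 0 < p) : tstar p ∈ Set.Ioo (0:ℝ) 1 := by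
  have hD := Dpos p hp
  have hM : 0 < (p/2+1) * p := Nat.mul_pos (by omega) hp
  have hM' : (1:ℝ) ≤ (((p/2+1) * p : ℕ) : ℝ) := by exact_mod_cast hM
  constructor
  · apply div_pos (by linarith) (by linarith)
  · rw [tstar, div_lt_one (by linarith)]
    have hle : (p/2+1) * p ≤ p * (p+1) := by
      calc (p/2+1) * p ≤ (p+1) * p := Nat.mul_le_mul_right p (by omega)
        _ = p * (p+1) := Nat.mul_comm _ _
    have hle' : (((p/2+1) * p : ℕ) : ℝ) ≤ ((p * (p+1) : ℕ) : ℝ) := by exact_mod_cast hle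
    linarith

lemma sigmaT_le_tstar (p : ℕ) (hp : 0 < p) (t : ℝ) :
    sigmaT p (p+1) t ≤ sigmaT p (p+1) (tstar p) := by
  rw [sigmaT_eq_card p hp t, sigmaT_eq_card p hp (tstar p)]
  have h1 := card_win_add_cmpl p t
  have h2 := card_cmpl_ge p hp t
  have h3 := card_win_add_cmpl p (tstar p)
  have h4 := card_cmpl_tstar p hp
  have h5 : (win p t).card ≤ (win p (tstar p)).card := by omega
  have h6 : ((win p t).card : ℤ) ≤ ((win p (tstar p)).card : ℤ) := by exact_mod_cast h5
  linarith

lemma sigmaMax_eq_tstar (p : ℕ) (hp : 0 < p) :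
    sigmaMax p (p+1) = sigmaT p (p+1) (tstar p) := by
  apply IsGreatest.csSup_eq
  constructor
  · exact ⟨tstar p, tstar_mem p hp, rfl⟩
  · rintro x ⟨t, _, rfl⟩
    exact sigmaT_le_tstar p hp t

end TorusAux

theorem sigmaMax_p_p_add_one (p : ℕ) (hp : 0 < p) :
    sigmaMax p (p + 1) =
      sigmaClassical p (p + 1) + (if Even p then (p : ℤ) - 2 else 0) := by
  classical
  rw [TorusAux.sigmaMax_eq_tstar p hp]
  have hclass : sigmaClassical p (p+1) = sigmaT p (p+1) (1/2) := rfl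
  rcases Nat.even_or_odd p with he | ho
  · -- even case
    obtain ⟨a, ha⟩ := he
    have ha' : p = 2 * a := by omega
    have ha1 : 1 ≤ a := by omega
    rw [if_pos (by exact ⟨a, ha⟩ : Even p)]
    have h1 := TorusAux.card_win_add_cmpl p (TorusAux.tstar p)
    rw [TorusAux.card_cmpl_tstar p hp] at h1
    have h2 := TorusAux.card_win_add_cmpl p (1/2 : ℝ)
    rw [TorusAux.card_cmpl_half_even p a hp ha'] at h2
    have hE : TorusAux.Ebound p = (a-1) * (a-1) := by
      rw [TorusAux.Ebound]
      congr 1 <;> omega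
    have hprod : a * (a-1) = (a-1) * (a-1) + (a-1) := by
      obtain ⟨b, rfl⟩ : ∃ b, a = b + 1 := ⟨a-1, by omega⟩
      simp
      ring
    rw [hE] at h1
    rw [hprod] at h2
    have hkey : (TorusAux.win p (TorusAux.tstar p)).card
        = (TorusAux.win p (1/2 : ℝ)).card + (a-1) := by
      generalize hG : (a-1) * (a-1) = X at h1 h2
      omega
    rw [hclass, TorusAux.sigmaT_eq_card p hp, TorusAux.sigmaT_eq_card p hp, hkey]
    have hpa : (p:ℤ) = 2 * (a:ℤ) := by exact_mod_cast ha'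
    push_cast [Nat.cast_sub ha1]
    ring_nf
    linarith
  · -- odd case
    have hne : ¬ Even p := by
      rcases ho with ⟨a, ha⟩
      rintro ⟨b, hb⟩
      omega
    rw [if_neg hne]
    obtain ⟨a, ha⟩ := ho
    have h1 := TorusAux.card_win_add_cmpl p (TorusAux.tstar p)
    rw [TorusAux.card_cmpl_tstar p hp] at h1
    have h2 := TorusAux.card_win_add_cmpl p (1/2 : ℝ)
    rw [TorusAux.card_cmpl_half_odd p a hp ha] at h2
    have hkey : (TorusAux.win p (TorusAux.tstar p)).card
        = (TorusAux.win p (1/2 : ℝ)).card := by omega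
    rw [hclass, TorusAux.sigmaT_eq_card p hp, TorusAux.sigmaT_eq_card p hp, hkey]
    ring
end

section
/- Let p > 0 be an integer. Then σ̂(p, 2p+1) = σ(p, 2p+1) + (p − 2) if p is even, and σ̂(p, 2p+1) = σ(p, 2p+1) + (p − 1) if p is odd. -/
open Finset

noncomputable section TKAux

/-- value i/p + j/(2p+1) -/
def tkVal (p : ℕ) (ij : ℕ × ℕ) : ℝ := (ij.1 : ℝ) / p + (ij.2 : ℝ) / (2 * p + 1)

def tkGrid (p : ℕ) : Finset (ℕ × ℕ) := Finset.Ioo 0 p ×ˢ Finset.Ioo 0 (2 * p + 1)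

def tkExF (p : ℕ) (t : ℝ) : Finset (ℕ × ℕ) :=
  (tkGrid p).filter fun ij => ¬ (t < tkVal p ij ∧ tkVal p ij < t + 1)

lemma mem_tkGrid {p : ℕ} {ij : ℕ × ℕ} :
    ij ∈ tkGrid p ↔ 0 < ij.1 ∧ ij.1 < p ∧ 0 < ij.2 ∧ ij.2 < 2 * p + 1 := by
  cases ij
  simp only [tkGrid, Finset.mem_product, Finset.mem_Ioo]
  tauto

lemma tkGrid_card (p : ℕ) : (tkGrid p).card = (p - 1) * (2 * p) := by
  simp [tkGrid, Nat.card_Ioo]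

lemma tkVal_eq (p : ℕ) (hp : 0 < p) (ij : ℕ × ℕ) :
    tkVal p ij = ((ij.1 * (2 * p + 1) + ij.2 * p : ℕ) : ℝ) / ((p * (2 * p + 1) : ℕ) : ℝ) := by
  have h1 : (p:ℝ) ≠ 0 := Nat.cast_ne_zero.2 hp.ne'
  have h2 : (2*(p:ℝ)+1) ≠ 0 := by positivity
  rw [tkVal]
  push_cast
  field_simp

lemma tkVal_le_div {p : ℕ} (hp : 0 < p) (ij : ℕ × ℕ) (c d : ℕ) (hd : 0 < d) :
    tkVal p ij ≤ (c : ℝ) / d ↔ (ij.1 * (2*p+1) + ij.2 * p) * d ≤ c * (p * (2*p+1)) := by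
  have hpq : (0:ℝ) < ((p * (2*p+1) : ℕ) : ℝ) := by
    exact_mod_cast Nat.mul_pos hp (by omega)
  have hd' : (0:ℝ) < (d:ℝ) := by exact_mod_cast hd
  rw [tkVal_eq p hp, div_le_div_iff₀ hpq hd']
  constructor <;> intro h <;> exact_mod_cast h

lemma tkVal_ge_div {p : ℕ} (hp : 0 < p) (ij : ℕ × ℕ) (c d : ℕ) (hd : 0 < d) :
    (c : ℝ) / d ≤ tkVal p ij ↔ c * (p * (2*p+1)) ≤ (ij.1 * (2*p+1) + ij.2 * p) * d := by
  have hpq : (0:ℝ) < ((p * (2*p+1) : ℕ) : ℝ) := by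
    exact_mod_cast Nat.mul_pos hp (by omega)
  have hd' : (0:ℝ) < (d:ℝ) := by exact_mod_cast hd
  rw [tkVal_eq p hp, div_le_div_iff₀ hd' hpq]
  constructor <;> intro h <;> exact_mod_cast h

end TKAux

section TKNat

-- nat-level characterizations
lemma tk_n1 {p i j : ℕ} (hi1 : 0 < i) (hi2 : i < p) (hj1 : 0 < j) :
    i*(2*p+1) + j*p ≤ p*p ↔ j + 2*i + 1 ≤ p := by
  constructor
  · intro h
    by_contra hc
    push_neg at hc
    have h2 : p*p ≤ p*(2*i+j) := Nat.mul_le_mul_left p (by omega)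
    have h3 : p*(2*i+j) = 2*(p*i) + p*j := by ring
    have h4 : i*(2*p+1) + j*p = 2*(p*i) + i + p*j := by ring
    linarith
  · intro h
    have h2 : p*(2*i+j+1) ≤ p*p := Nat.mul_le_mul_left p (by omega)
    have h3 : p*(2*i+j+1) = 2*(p*i) + p*j + p := by ring
    have h4 : i*(2*p+1) + j*p = 2*(p*i) + i + p*j := by ring
    linarith

lemma tk_n2 {p i j : ℕ} (hi1 : 0 < i) (hi2 : i < p) (hj1 : 0 < j) :
    (3*p+1) * p ≤ i*(2*p+1) + j*p ↔ 3*p + 1 ≤ j + 2*i := by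
  constructor
  · intro h
    by_contra hc
    push_neg at hc
    have h2 : p*(2*i+j) ≤ p*(3*p) := Nat.mul_le_mul_left p (by omega)
    have h3 : p*(2*i+j) = 2*(p*i) + p*j := by ring
    have h4 : i*(2*p+1) + j*p = 2*(p*i) + i + p*j := by ring
    have h5 : (3*p+1)*p = 3*(p*p) + p := by ring
    have h6 : p*(3*p) = 3*(p*p) := by ring
    linarith
  · intro h
    have h2 : p*(3*p+1) ≤ p*(2*i+j) := Nat.mul_le_mul_left p (by omega)
    have h3 : p*(2*i+j) = 2*(p*i) + p*j := by ring
    have h4 : i*(2*p+1) + j*p = 2*(p*i) + i + p*j := by ring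
    have h5 : (3*p+1)*p = p*(3*p+1) := by ring
    linarith

lemma tk_n3 {p i j : ℕ} (hi1 : 0 < i) (hi2 : i < p) (hj1 : 0 < j) :
    (i*(2*p+1) + j*p) * 2 ≤ 1 * (p*(2*p+1)) ↔ j + 2*i ≤ p := by
  constructor
  · intro h
    by_contra hc
    push_neg at hc
    have h2 : p*(p+1) ≤ p*(2*i+j) := Nat.mul_le_mul_left p (by omega)
    have h3 : p*(2*i+j) = 2*(p*i) + p*j := by ring
    have h4 : (i*(2*p+1) + j*p)*2 = 4*(p*i) + 2*i + 2*(p*j) := by ring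
    have h5 : 1*(p*(2*p+1)) = 2*(p*p) + p := by ring
    have h6 : p*(p+1) = p*p + p := by ring
    linarith
  · intro h
    have h2 : p*(2*i+j) ≤ p*p := Nat.mul_le_mul_left p (by omega)
    have h3 : p*(2*i+j) = 2*(p*i) + p*j := by ring
    have h4 : (i*(2*p+1) + j*p)*2 = 4*(p*i) + 2*i + 2*(p*j) := by ring
    have h5 : 1*(p*(2*p+1)) = 2*(p*p) + p := by ring
    have h7 : 2*i + 1 ≤ p := by omega
    linarith

lemma tk_n4 {p i j : ℕ} (hi1 : 0 < i) (hi2 : i < p) (hj1 : 0 < j) (hj2 : j < 2*p+1) :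
    3 * (p*(2*p+1)) ≤ (i*(2*p+1) + j*p) * 2 ↔ 3*p + 1 ≤ j + 2*i := by
  constructor
  · intro h
    by_contra hc
    push_neg at hc
    have h2 : p*(2*i+j) ≤ p*(3*p) := Nat.mul_le_mul_left p (by omega)
    have h3 : p*(2*i+j) = 2*(p*i) + p*j := by ring
    have h4 : (i*(2*p+1) + j*p)*2 = 4*(p*i) + 2*i + 2*(p*j) := by ring
    have h5 : 3*(p*(2*p+1)) = 6*(p*p) + 3*p := by ring
    have h6 : p*(3*p) = 3*(p*p) := by ring
    linarith
  · intro h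
    have h2 : p*(3*p+1) ≤ p*(2*i+j) := Nat.mul_le_mul_left p (by omega)
    have h3 : p*(2*i+j) = 2*(p*i) + p*j := by ring
    have h4 : (i*(2*p+1) + j*p)*2 = 4*(p*i) + 2*i + 2*(p*j) := by ring
    have h5 : 3*(p*(2*p+1)) = 6*(p*p) + 3*p := by ring
    have h6 : p*(3*p+1) = 3*(p*p) + p := by ring
    have h7 : p + 1 ≤ 2*i := by omega
    linarith

end TKNat

section TKChar

lemma tk_char_tstar {p : ℕ} (hp : 0 < p) {ij : ℕ × ℕ} (hg : ij ∈ tkGrid p) :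
    (tkVal p ij ≤ (p:ℝ)/(2*(p:ℝ)+1) ↔ ij.2 + 2*ij.1 + 1 ≤ p) ∧
    ((p:ℝ)/(2*(p:ℝ)+1) + 1 ≤ tkVal p ij ↔ 3*p+1 ≤ ij.2 + 2*ij.1) := by
  rw [mem_tkGrid] at hg
  obtain ⟨hi1, hi2, hj1, hj2⟩ := hg
  have hq : (0:ℕ) < 2*p+1 := by omega
  have hcancel : ∀ m n : ℕ, m*(2*p+1) ≤ n*(2*p+1) ↔ m ≤ n := fun m n =>
    ⟨fun h => Nat.le_of_mul_le_mul_right h hq, fun h => Nat.mul_le_mul_right _ h⟩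
  constructor
  · have he : (p:ℝ)/(2*(p:ℝ)+1) = ((p:ℕ):ℝ)/(((2*p+1 : ℕ)):ℝ) := by push_cast; ring_nf
    rw [he, tkVal_le_div hp ij p (2*p+1) hq,
      show p * (p*(2*p+1)) = (p*p)*(2*p+1) by ring, hcancel]
    exact tk_n1 hi1 hi2 hj1
  · have he : (p:ℝ)/(2*(p:ℝ)+1) + 1 = ((3*p+1 : ℕ):ℝ)/(((2*p+1 : ℕ)):ℝ) := by
      have : (2*(p:ℝ)+1) ≠ 0 := by positivity
      push_cast
      field_simp
      ring
    rw [he, tkVal_ge_div hp ij (3*p+1) (2*p+1) hq,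
      show (3*p+1) * (p*(2*p+1)) = ((3*p+1)*p)*(2*p+1) by ring, hcancel]
    exact tk_n2 hi1 hi2 hj1

lemma tk_char_half {p : ℕ} (hp : 0 < p) {ij : ℕ × ℕ} (hg : ij ∈ tkGrid p) :
    (tkVal p ij ≤ 1/2 ↔ ij.2 + 2*ij.1 ≤ p) ∧
    ((1:ℝ)/2 + 1 ≤ tkVal p ij ↔ 3*p+1 ≤ ij.2 + 2*ij.1) := by
  rw [mem_tkGrid] at hg
  obtain ⟨hi1, hi2, hj1, hj2⟩ := hg
  constructor
  · have he : (1:ℝ)/2 = ((1:ℕ):ℝ)/((2:ℕ):ℝ) := by norm_num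
    rw [he, tkVal_le_div hp ij 1 2 (by norm_num)]
    exact tk_n3 hi1 hi2 hj1
  · have he : (1:ℝ)/2 + 1 = ((3:ℕ):ℝ)/((2:ℕ):ℝ) := by norm_num
    rw [he, tkVal_ge_div hp ij 3 2 (by norm_num),
      show 3 * (p*(2*p+1)) = 3*(p*(2*p+1)) by ring]
    exact tk_n4 hi1 hi2 hj1 hj2

lemma tkExF_tstar (p : ℕ) (hp : 0 < p) :
    tkExF p ((p:ℝ)/(2*(p:ℝ)+1)) =
      (tkGrid p).filter (fun ij => ij.2 + 2*ij.1 + 1 ≤ p ∨ 3*p+1 ≤ ij.2 + 2*ij.1) := by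
  rw [tkExF]
  refine Finset.filter_congr fun ij hg => ?_
  rw [not_and_or, not_lt, not_lt]
  exact or_congr (tk_char_tstar hp hg).1 (tk_char_tstar hp hg).2

lemma tkExF_half (p : ℕ) (hp : 0 < p) :
    tkExF p (1/2) =
      (tkGrid p).filter (fun ij => ij.2 + 2*ij.1 ≤ p ∨ 3*p+1 ≤ ij.2 + 2*ij.1) := by
  rw [tkExF]
  refine Finset.filter_congr fun ij hg => ?_
  rw [not_and_or, not_lt, not_lt]
  exact or_congr (tk_char_half hp hg).1 (tk_char_half hp hg).2

end TKChar

section TKCount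

lemma tk_card_low (p c : ℕ) :
    ((tkGrid p).filter fun ij => ij.2 + 2*ij.1 + c ≤ p).card
      = ∑ i ∈ Ioo 0 p, (p - (2*i + c)) := by
  have hbu : (tkGrid p).filter (fun ij => ij.2 + 2*ij.1 + c ≤ p)
      = (Ioo 0 p).biUnion (fun i => {i} ×ˢ Icc 1 (p - (2*i + c))) := by
    ext ⟨i, j⟩
    simp only [Finset.mem_filter, Finset.mem_biUnion, Finset.mem_product, Finset.mem_Icc,
      Finset.mem_Ioo, Finset.mem_singleton, mem_tkGrid]
    constructor
    · rintro ⟨⟨hi1, hi2, hj1, hj2⟩, hle⟩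
      exact ⟨i, ⟨hi1, hi2⟩, rfl, by omega⟩
    · rintro ⟨a, ⟨ha1, ha2⟩, rfl, hj⟩
      refine ⟨⟨ha1, ha2, by omega, by omega⟩, by omega⟩
  rw [hbu, Finset.card_biUnion]
  · refine Finset.sum_congr rfl fun i _ => ?_
    simp [Nat.card_Icc]
  · intro a _ b _ hab
    simp only [Finset.disjoint_left, Finset.mem_product, Finset.mem_singleton]
    rintro ⟨x, y⟩ ⟨rfl, -⟩ ⟨h, -⟩
    exact hab h

lemma tk_card_union (p c : ℕ) :
    ((tkGrid p).filter fun ij => ij.2 + 2*ij.1 + c ≤ p ∨ 3*p+1 ≤ ij.2 + 2*ij.1).card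
      = (∑ i ∈ Ioo 0 p, (p - (2*i + c)))
        + ((tkGrid p).filter fun ij => 3*p+1 ≤ ij.2 + 2*ij.1).card := by
  rw [Finset.filter_or, Finset.card_union_of_disjoint, tk_card_low]
  rw [Finset.disjoint_left]
  intro ij h1 h2
  rw [Finset.mem_filter] at h1 h2
  omega

lemma tk_sum (p : ℕ) :
    ∑ i ∈ Ioo 0 p, (p - (2*i + 0)) = (∑ i ∈ Ioo 0 p, (p - (2*i + 1))) + (p-1)/2 := by
  have h1 : ∀ i ∈ Ioo 0 p, p - (2*i + 0) = (p - (2*i+1)) + (if 2*i+1 ≤ p then 1 else 0) := by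
    intro i hi
    split_ifs <;> omega
  rw [Finset.sum_congr rfl h1, Finset.sum_add_distrib]
  congr 1
  rw [← Finset.card_filter]
  have h2 : (Ioo 0 p).filter (fun i => 2*i+1 ≤ p) = Ioo 0 ((p+1)/2) := by
    ext i
    simp only [Finset.mem_filter, Finset.mem_Ioo]
    omega
  rw [h2, Nat.card_Ioo]
  omega

end TKCount

section TKSigma

lemma latticeCount_eq (p : ℕ) (t : ℝ) :
    latticeCount p (2*p+1) t
      = ((tkGrid p).filter fun ij => t < tkVal p ij ∧ tkVal p ij < t+1).card := by
  rw [latticeCount, ← Set.ncard_coe_finset]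
  congr 1
  ext ⟨i, j⟩
  simp only [Finset.mem_coe, Finset.mem_filter, mem_tkGrid]
  simp only [Finset.coe_filter, Set.mem_setOf_eq, mem_tkGrid, tkVal]
  push_cast
  tauto

lemma tk_sigmaT (p : ℕ) (hp : 0 < p) (t : ℝ) :
    sigmaT p (2*p+1) t = ((p:ℤ) - 1)*(2*p) - 2*((tkExF p t).card : ℤ) := by
  have hsum : (((tkGrid p).filter fun ij => t < tkVal p ij ∧ tkVal p ij < t+1).card)
      + (tkExF p t).card = (p-1)*(2*p) := by
    rw [tkExF, Finset.card_filter_add_card_filter_not, tkGrid_card]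
  have hp' : 1 ≤ p := hp
  rw [sigmaT, latticeCount_eq]
  zify [hp'] at hsum
  push_cast
  linarith

end TKSigma

noncomputable section TKInj

def tkAB (p : ℕ) (ij : ℕ × ℕ) : ℕ × ℕ :=
  if ij.2 + 2*ij.1 + 1 ≤ p then (2*ij.1, ij.2) else (2*(p - ij.1) - 1, 2*p+1 - ij.2)

open Classical in
def tkPhi (p : ℕ) (t : ℝ) (ij : ℕ × ℕ) : ℕ × ℕ :=
  if tkVal p (tkAB p ij) ≤ t then tkAB p ij
  else ((tkAB p ij).1 + (tkAB p ij).2, 2*p+1 - (tkAB p ij).2)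

lemma tkAB_spec {p : ℕ} (hp : 0 < p) {ij : ℕ × ℕ}
    (h : ij ∈ tkExF p ((p:ℝ)/(2*(p:ℝ)+1))) :
    1 ≤ (tkAB p ij).1 ∧ 1 ≤ (tkAB p ij).2 ∧ (tkAB p ij).1 + (tkAB p ij).2 + 1 ≤ p := by
  rw [tkExF_tstar p hp, Finset.mem_filter, mem_tkGrid] at h
  obtain ⟨⟨hi1, hi2, hj1, hj2⟩, hor⟩ := h
  rw [tkAB]
  split_ifs with hc <;> simp only <;> omega

lemma tkVal_shift (p : ℕ) (hp : 0 < p) (a b : ℕ) (hb : b ≤ 2*p+1) :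
    tkVal p (a + b, 2*p+1 - b) = tkVal p (a, b) + 1 + (b:ℝ)/((p:ℝ)*(2*(p:ℝ)+1)) := by
  have h1 : (p:ℝ) ≠ 0 := Nat.cast_ne_zero.2 hp.ne'
  have h2 : (2*(p:ℝ)+1) ≠ 0 := by positivity
  simp only [tkVal]
  rw [Nat.cast_sub hb, Nat.cast_add]
  push_cast
  field_simp
  ring

lemma tkPhi_maps (p : ℕ) (hp : 0 < p) (t : ℝ) :
    ∀ ij ∈ tkExF p ((p:ℝ)/(2*(p:ℝ)+1)), tkPhi p t ij ∈ tkExF p t := by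
  intro ij h
  obtain ⟨ha, hb, habp⟩ := tkAB_spec hp h
  rw [tkPhi]
  split_ifs with hst
  · rw [tkExF, Finset.mem_filter, mem_tkGrid]
    exact ⟨⟨by omega, by omega, by omega, by omega⟩,
      fun hcon => absurd hcon.1 (not_lt.2 hst)⟩
  · push_neg at hst
    rw [tkExF, Finset.mem_filter, mem_tkGrid]
    have hshift := tkVal_shift p hp (tkAB p ij).1 (tkAB p ij).2 (by omega)
    have hb' : (0:ℝ) < ((tkAB p ij).2 : ℝ) := by exact_mod_cast hb
    have hbpos : (0:ℝ) < ((tkAB p ij).2:ℝ)/((p:ℝ)*(2*(p:ℝ)+1)) := by positivity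
    refine ⟨⟨by omega, by omega, by omega, by omega⟩, fun hcon => ?_⟩
    have h2 := hcon.2
    rw [hshift] at h2
    linarith

lemma tkPhi_inj (p : ℕ) (hp : 0 < p) (t : ℝ) :
    Set.InjOn (tkPhi p t) (tkExF p ((p:ℝ)/(2*(p:ℝ)+1))) := by
  intro u hu v hv heq
  obtain ⟨hau, hbu, habu⟩ := tkAB_spec hp hu
  obtain ⟨hav, hbv, habv⟩ := tkAB_spec hp hv
  have habeq : tkAB p u = tkAB p v := by
    by_cases h1 : tkVal p (tkAB p u) ≤ t <;> by_cases h2 : tkVal p (tkAB p v) ≤ t <;>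
      · rw [tkPhi, tkPhi] at heq
        first
        | (rw [if_pos h1, if_pos h2] at heq; exact heq)
        | (rw [if_pos h1, if_neg h2] at heq
           exfalso
           have hshift := tkVal_shift p hp (tkAB p v).1 (tkAB p v).2 (by omega)
           have hb' : (0:ℝ) < ((tkAB p v).2 : ℝ) := by exact_mod_cast hbv
           have hbpos : (0:ℝ) < ((tkAB p v).2:ℝ)/((p:ℝ)*(2*(p:ℝ)+1)) := by positivity
           have hval : tkVal p (tkAB p u)
               = tkVal p ((tkAB p v).1 + (tkAB p v).2, 2*p+1 - (tkAB p v).2) := by rw [heq]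
           rw [hshift] at hval
           push_neg at h2
           linarith)
        | (rw [if_neg h1, if_pos h2] at heq
           exfalso
           have hshift := tkVal_shift p hp (tkAB p u).1 (tkAB p u).2 (by omega)
           have hb' : (0:ℝ) < ((tkAB p u).2 : ℝ) := by exact_mod_cast hbu
           have hbpos : (0:ℝ) < ((tkAB p u).2:ℝ)/((p:ℝ)*(2*(p:ℝ)+1)) := by positivity
           have hval : tkVal p ((tkAB p u).1 + (tkAB p u).2, 2*p+1 - (tkAB p u).2)
               = tkVal p (tkAB p v) := by rw [heq]
           rw [hshift] at hval
           push_neg at h1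
           linarith)
        | (rw [if_neg h1, if_neg h2] at heq
           rw [Prod.mk.injEq] at heq
           have hb2 : (tkAB p u).2 = (tkAB p v).2 := by omega
           have ha2 : (tkAB p u).1 = (tkAB p v).1 := by omega
           exact Prod.ext ha2 hb2)
  -- step 2 : recover ij from tkAB
  rw [tkExF_tstar p hp, Finset.mem_coe, Finset.mem_filter, mem_tkGrid] at hu hv
  obtain ⟨⟨hu1, hu2, hu3, hu4⟩, -⟩ := hu
  obtain ⟨⟨hv1, hv2, hv3, hv4⟩, -⟩ := hv
  obtain ⟨i1, j1⟩ := u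
  obtain ⟨i2, j2⟩ := v
  simp only [tkAB] at habeq
  rw [Prod.mk.injEq]
  split_ifs at habeq with hc1 hc2 hc2 <;> rw [Prod.mk.injEq] at habeq <;>
    simp only at * <;> omega

lemma tk_inj (p : ℕ) (hp : 0 < p) (t : ℝ) :
    (tkExF p ((p:ℝ)/(2*(p:ℝ)+1))).card ≤ (tkExF p t).card :=
  Finset.card_le_card_of_injOn (tkPhi p t) (tkPhi_maps p hp t) (tkPhi_inj p hp t)

end TKInj

theorem sigmaMax_p_two_p_add_one (p : ℕ) (hp : 0 < p) :
    sigmaMax p (2 * p + 1) =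
      sigmaClassical p (2 * p + 1) + (if Even p then (p : ℤ) - 2 else (p : ℤ) - 1) := by
  have hp' : (0:ℝ) < p := by exact_mod_cast hp
  have hmem : (p:ℝ)/(2*(p:ℝ)+1) ∈ Set.Ioo (0:ℝ) 1 :=
    ⟨by positivity, by rw [div_lt_one (by positivity)]; linarith⟩
  have hub : ∀ t ∈ Set.Ioo (0:ℝ) 1,
      sigmaT p (2*p+1) t ≤ sigmaT p (2*p+1) ((p:ℝ)/(2*(p:ℝ)+1)) := by
    intro t _
    rw [tk_sigmaT p hp t, tk_sigmaT p hp ((p:ℝ)/(2*(p:ℝ)+1))]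
    have h := tk_inj p hp t
    have h' : ((tkExF p ((p:ℝ)/(2*(p:ℝ)+1))).card : ℤ) ≤ ((tkExF p t).card : ℤ) := by
      exact_mod_cast h
    linarith
  have hgr : IsGreatest (sigmaT p (2*p+1) '' Set.Ioo (0:ℝ) 1)
      (sigmaT p (2*p+1) ((p:ℝ)/(2*(p:ℝ)+1))) :=
    ⟨⟨_, hmem, rfl⟩, by rintro y ⟨s, hs, rfl⟩; exact hub s hs⟩
  rw [sigmaMax, hgr.csSup_eq, sigmaClassical]
  rw [tk_sigmaT p hp ((p:ℝ)/(2*(p:ℝ)+1)), tk_sigmaT p hp (1/2)]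
  have hstar : (tkExF p ((p:ℝ)/(2*(p:ℝ)+1))).card
      = (∑ i ∈ Ioo 0 p, (p - (2*i + 1)))
        + ((tkGrid p).filter fun ij => 3*p+1 ≤ ij.2 + 2*ij.1).card := by
    rw [tkExF_tstar p hp, tk_card_union]
  have hhalf : (tkExF p (1/2)).card
      = (∑ i ∈ Ioo 0 p, (p - (2*i + 0)))
        + ((tkGrid p).filter fun ij => 3*p+1 ≤ ij.2 + 2*ij.1).card := by
    rw [tkExF_half p hp]
    have h0 := tk_card_union p 0
    simpa using h0
  have key : ((tkExF p (1/2)).card : ℤ)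
      = ((tkExF p ((p:ℝ)/(2*(p:ℝ)+1))).card : ℤ) + (((p-1)/2 : ℕ) : ℤ) := by
    rw [hstar, hhalf, tk_sum p]
    push_cast
    ring
  rcases Nat.even_or_odd p with he | ho
  · rw [if_pos he]
    have hpar : p % 2 = 0 := Nat.even_iff.mp he
    have hd : (((p-1)/2 : ℕ) : ℤ) * 2 = (p:ℤ) - 2 := by omega
    linarith [key, hd]
  · rw [if_neg (Nat.not_even_iff_odd.mpr ho)]
    have hpar : p % 2 = 1 := Nat.odd_iff.mp ho
    have hd : (((p-1)/2 : ℕ) : ℤ) * 2 = (p:ℤ) - 1 := by omega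
    linarith [key, hd]
end

section
/- Let p > 0 be an integer. Then σ̂(p, 2p+1) = p² + p − 2. -/
open Finset


open scoped Classical in
noncomputable def rowF (p q : ℕ) (t : ℝ) (i : ℕ) : Finset ℕ :=
  (Finset.Ioo 0 q).filter fun j => t < (i : ℝ) / p + (j : ℝ) / q ∧ (i : ℝ) / p + (j : ℝ) / q < t + 1

lemma mem_rowF {p q : ℕ} {t : ℝ} {i j : ℕ} :
    j ∈ rowF p q t i ↔ 0 < j ∧ j < q ∧
      t < (i : ℝ) / p + (j : ℝ) / q ∧ (i : ℝ) / p + (j : ℝ) / q < t + 1 := by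
  simp only [rowF, Finset.mem_filter, Finset.mem_Ioo]
  tauto

lemma latticeCount_eq_sum (p q : ℕ) (t : ℝ) :
    latticeCount p q t = ∑ i ∈ Finset.Ico 1 p, (rowF p q t i).card := by
  classical
  have hset : {ij : ℕ × ℕ | 0 < ij.1 ∧ ij.1 < p ∧ 0 < ij.2 ∧ ij.2 < q ∧
      t < (ij.1 : ℝ) / p + (ij.2 : ℝ) / q ∧ (ij.1 : ℝ) / p + (ij.2 : ℝ) / q < t + 1}
      = ↑((Finset.Ico 1 p ×ˢ Finset.Ioo 0 q).filter fun ij =>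
          t < (ij.1 : ℝ) / p + (ij.2 : ℝ) / q ∧ (ij.1 : ℝ) / p + (ij.2 : ℝ) / q < t + 1) := by
    ext ⟨i, j⟩
    simp only [Set.mem_setOf_eq, Finset.coe_filter, Finset.mem_product,
      Finset.mem_Ico, Finset.mem_Ioo, Set.mem_setOf_eq]
    constructor
    · rintro ⟨h1, h2, h3, h4, h5, h6⟩; exact ⟨⟨⟨h1, h2⟩, h3, h4⟩, h5, h6⟩
    · rintro ⟨⟨⟨h1, h2⟩, h3, h4⟩, h5, h6⟩; exact ⟨h1, h2, h3, h4, h5, h6⟩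
  rw [latticeCount, hset, Set.ncard_coe_finset]
  rw [Finset.card_eq_sum_card_fiberwise
    (f := fun ij : ℕ × ℕ => ij.1) (t := Finset.Ico 1 p)
    (fun x hx => by simp only [Finset.mem_coe, Finset.mem_filter, Finset.mem_product] at hx; exact hx.1.1)]
  refine Finset.sum_congr rfl fun i hi => ?_
  have hfib : ((Finset.Ico 1 p ×ˢ Finset.Ioo 0 q).filter fun ij =>
          t < (ij.1 : ℝ) / p + (ij.2 : ℝ) / q ∧ (ij.1 : ℝ) / p + (ij.2 : ℝ) / q < t + 1).filter
          (fun ij => ij.1 = i)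
      = (rowF p q t i).map ⟨fun j => (i, j), fun a b h => by simpa using h⟩ := by
    ext ⟨a, b⟩
    simp only [Finset.mem_filter, Finset.mem_product, Finset.mem_Ico, Finset.mem_Ioo,
      Finset.mem_map, Function.Embedding.coeFn_mk, mem_rowF]
    constructor
    · rintro ⟨⟨⟨h1, h2⟩, h3, h4⟩, rfl⟩
      exact ⟨b, ⟨h2.1, h2.2, h3, h4⟩, rfl⟩
    · rintro ⟨j, ⟨hj1, hj2, hj3, hj4⟩, h⟩
      obtain ⟨rfl, rfl⟩ : i = a ∧ j = b := Prod.ext_iff.mp h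
      simp only [Finset.mem_Ico] at hi
      exact ⟨⟨⟨hi, ⟨hj1, hj2⟩⟩, hj3, hj4⟩, rfl⟩
  rw [hfib, Finset.card_map]


lemma rowF_card_le (p q : ℕ) (t : ℝ) (i : ℕ) : (rowF p q t i).card ≤ q - 1 := by
  calc (rowF p q t i).card ≤ (Finset.Ioo 0 q).card := Finset.card_filter_le _ _
    _ = q - 1 := by rw [Nat.card_Ioo]; omega

lemma pair_card_le (p : ℕ) (t : ℝ) (i : ℕ) (h1 : 1 ≤ i) (h2 : 2 * i < p) :
    (rowF p (2*p+1) t i).card + (rowF p (2*p+1) t (p-i)).card ≤ 2*p+1+4*i := by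
  have hip : i < p := by omega
  have hp0 : (0:ℝ) < p := by exact_mod_cast Nat.pos_of_ne_zero (by omega)
  have hq0 : (0:ℝ) < ((2*p+1 : ℕ) : ℝ) := by positivity
  set Q : ℝ := ((2*p+1 : ℕ) : ℝ) with hQ
  set x : ℝ := (t - (i:ℝ)/p) * Q with hx
  set y : ℝ := (t - ((p-i : ℕ):ℝ)/p) * Q with hy
  -- first row: every j lands in Ioc ⌊x⌋ 2p
  have hA : (rowF p (2*p+1) t i).card ≤ (Finset.Ioc ⌊x⌋ (2*(p:ℤ))).card := by
    apply Finset.card_le_card_of_injOn (fun j : ℕ => (j:ℤ))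
    · intro j hj
      rw [Finset.mem_coe, mem_rowF] at hj
      obtain ⟨hj0, hjq, hlt, _⟩ := hj
      rw [Finset.mem_coe, Finset.mem_Ioc]; beta_reduce
      constructor
      · rw [Int.floor_lt]
        push_cast
        rw [hx]
        have : t - (i:ℝ)/p < (j:ℝ)/Q := by linarith
        calc (t - (i:ℝ)/p) * Q < ((j:ℝ)/Q) * Q := by
              exact mul_lt_mul_of_pos_right this hq0
          _ = (j:ℝ) := by field_simp
      · exact_mod_cast by omega
    · intro a _ b _ h; simpa using h
  -- second row: every j lands in Icc 1 (⌊y⌋ + (2p+1))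
  have hB : (rowF p (2*p+1) t (p-i)).card ≤ (Finset.Icc (1:ℤ) (⌊y⌋ + (2*(p:ℤ)+1))).card := by
    apply Finset.card_le_card_of_injOn (fun j : ℕ => (j:ℤ))
    · intro j hj
      rw [Finset.mem_coe, mem_rowF] at hj
      obtain ⟨hj0, hjq, _, hlt⟩ := hj
      rw [Finset.mem_coe, Finset.mem_Icc]; beta_reduce
      refine ⟨by exact_mod_cast hj0, ?_⟩
      have h2' : ((2*(p:ℤ)+1) : ℤ) = ((2*p+1 : ℕ) : ℤ) := by push_cast; ring
      rw [h2', ← Int.floor_add_intCast y, Int.le_floor]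
      push_cast
      have : ((j:ℝ))/Q < t + 1 - ((p-i : ℕ):ℝ)/p := by linarith
      have h3 : (j:ℝ) < (t + 1 - ((p-i : ℕ):ℝ)/p) * Q := by
        calc (j:ℝ) = ((j:ℝ)/Q) * Q := by field_simp
          _ < _ := mul_lt_mul_of_pos_right this hq0
      have h4 : (t + 1 - ((p-i : ℕ):ℝ)/p) * Q = y + Q := by rw [hy]; ring
      rw [h4] at h3
      rw [hQ] at h3
      push_cast at h3
      linarith
    · intro a _ b _ h; simpa using h
  -- floor comparison
  have hxy : y + 2*((p:ℝ) - 2*i) ≤ x := by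
    have hcast : ((p-i : ℕ):ℝ) = (p:ℝ) - i := by
      push_cast [Nat.cast_sub hip.le]; ring
    have hd : (1:ℝ) ≤ (p:ℝ) - 2*i := by
      have h5 : (2*i+1 : ℕ) ≤ p := by omega
      have h6 := (Nat.cast_le (α := ℝ)).mpr h5
      push_cast at h6; linarith
    have hQval : Q = 2*(p:ℝ)+1 := by rw [hQ]; push_cast; ring
    have hdiff : x - y = ((p:ℝ) - 2*i) * (2*(p:ℝ)+1) / p := by
      rw [hx, hy, hcast, hQval]; field_simp; ring
    have hge : 2*((p:ℝ) - 2*i) ≤ ((p:ℝ) - 2*i) * (2*(p:ℝ)+1) / p := by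
      rw [le_div_iff₀ hp0]; nlinarith
    linarith
  have hfl : ⌊y⌋ + 2*((p:ℤ) - 2*i) ≤ ⌊x⌋ := by
    have : ⌊y + ((2*((p:ℤ) - 2*i) : ℤ) : ℝ)⌋ ≤ ⌊x⌋ := by
      apply Int.floor_le_floor
      push_cast
      convert hxy using 2 <;> push_cast <;> ring
    rwa [Int.floor_add_intCast] at this
  -- put everything together
  have c1 := rowF_card_le p (2*p+1) t i
  have c2 := rowF_card_le p (2*p+1) t (p-i)
  rw [Int.card_Ioc] at hA
  rw [Int.card_Icc] at hB
  omega


lemma four_mul_sum_min : ∀ p : ℕ, 4 * ∑ i ∈ Finset.range p, min i (p - i) = p * p - p % 2 := by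
  intro p
  induction p with
  | zero => simp
  | succ p ih =>
    have step : ∑ i ∈ Finset.range (p+1), min i (p + 1 - i)
        = (∑ i ∈ Finset.range p, min i (p - i)) + (p - p / 2) := by
      have hpt : ∀ i ∈ Finset.range (p+1),
          min i (p + 1 - i) = min i (p - i) + (if p < 2 * i then 1 else 0) := by
        intro i hi
        simp only [Finset.mem_range] at hi
        split <;> omega
      rw [Finset.sum_congr rfl hpt, Finset.sum_add_distrib]
      have h1 : ∑ i ∈ Finset.range (p+1), min i (p - i)
          = ∑ i ∈ Finset.range p, min i (p - i) := by
        rw [Finset.sum_range_succ]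
        simp
      have h2 : (∑ i ∈ Finset.range (p+1), if p < 2 * i then 1 else 0)
          = p - p / 2 := by
        rw [Finset.sum_boole]
        simp only [Nat.cast_id]
        have hf : Finset.filter (fun i => p < 2 * i) (Finset.range (p+1))
            = Finset.Ico (p/2 + 1) (p+1) := by
          ext i
          simp only [Finset.mem_filter, Finset.mem_range, Finset.mem_Ico]
          omega
        rw [hf, Nat.card_Ico]
        omega
      rw [h1, h2]
    rw [step]
    have g3 : (p+1) * (p+1) = p * p + 2*p + 1 := by ring
    rw [g3]
    have hpar : (p * p) % 2 = p % 2 := by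
      have h := Nat.mul_mod p p 2
      rcases Nat.mod_two_eq_zero_or_one p with h1 | h1 <;> rw [h1] at h ⊢ <;> simpa using h
    generalize hK : p * p = K at ih hpar ⊢
    omega

lemma sum_m (p : ℕ) (hp : 0 < p) :
    ∑ i ∈ Finset.Ico 1 p, (2*p + 4 * min i (p - i) + (if 2*i = p then 0 else 1))
      = 3*p*p - p - 2 := by
  obtain ⟨m, rfl⟩ : ∃ m, p = m + 1 := ⟨p - 1, by omega⟩
  have hrange : ∑ i ∈ Finset.range (m+1), min i (m + 1 - i)
      = ∑ i ∈ Finset.Ico 1 (m+1), min i (m + 1 - i) := by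
    rw [Finset.range_eq_Ico,
      ← Finset.sum_Ico_consecutive _ (by omega : 0 ≤ 1) (by omega : 1 ≤ m+1)]
    simp
  rw [Finset.sum_add_distrib, Finset.sum_add_distrib]
  have e1 : ∑ _i ∈ Finset.Ico 1 (m+1), 2*(m+1) = m * (2*(m+1)) := by
    rw [Finset.sum_const, Nat.card_Ico, smul_eq_mul]
    congr 1
  have e2 : ∑ i ∈ Finset.Ico 1 (m+1), 4 * min i (m + 1 - i)
      = 4 * ∑ i ∈ Finset.Ico 1 (m+1), min i (m + 1 - i) := by
    rw [Finset.mul_sum]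
  have e3 : (∑ i ∈ Finset.Ico 1 (m+1), if 2*i = m+1 then 0 else 1)
      = m - (1 - (m+1) % 2) := by
    have hrw : (∑ i ∈ Finset.Ico 1 (m+1), if 2*i = m+1 then 0 else 1)
        = (∑ i ∈ Finset.Ico 1 (m+1), if 2*i = m+1 then 1 else 0)
          + (∑ i ∈ Finset.Ico 1 (m+1), if 2*i = m+1 then 0 else 1)
          - (∑ i ∈ Finset.Ico 1 (m+1), if 2*i = m+1 then 1 else 0) := by omega
    rw [hrw, ← Finset.sum_add_distrib]
    have hone : (∑ i ∈ Finset.Ico 1 (m+1),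
        ((if 2*i = m+1 then 1 else 0) + if 2*i = m+1 then 0 else 1)) = m := by
      have : ∀ i ∈ Finset.Ico 1 (m+1),
          ((if 2*i = m+1 then 1 else 0) + if 2*i = m+1 then 0 else 1) = 1 := by
        intro i _; split <;> omega
      rw [Finset.sum_congr rfl this, Finset.sum_const, Nat.card_Ico, smul_eq_mul, mul_one]
      omega
    rw [hone, Finset.sum_boole]
    simp only [Nat.cast_id]
    have hfil : Finset.filter (fun i => 2*i = m+1) (Finset.Ico 1 (m+1))
        = if (m+1) % 2 = 0 then {(m+1)/2} else ∅ := by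
      split
      · ext i; simp only [Finset.mem_filter, Finset.mem_Ico, Finset.mem_singleton]; omega
      · ext i; simp only [Finset.mem_filter, Finset.mem_Ico, Finset.notMem_empty, iff_false,
          not_and]
        intro _; omega
    rw [hfil]
    split <;> simp <;> omega
  rw [e1, e2, ← hrange, e3]
  have h4 := four_mul_sum_min (m+1)
  have g1 : m * (2*(m+1)) = 2*(m*m) + 2*m := by ring
  have g2 : 3*(m+1)*(m+1) = 3*(m*m) + 6*m + 3 := by ring
  have g3 : (m+1)*(m+1) = m*m + 2*m + 1 := by ring
  rw [g3] at h4
  rw [g1, g2]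
  generalize hK : m * m = K at h4 ⊢
  omega


lemma rowF_card_at_tstar (p i : ℕ) (h1 : 1 ≤ i) (h2 : i < p) :
    (rowF p (2*p+1) ((2*(p:ℝ)*p + 1)/(2*(p:ℝ)*(2*(p:ℝ)+1))) i).card
      = min (p + 2*i + 1) (3*p - 2*i) := by
  have hp0 : (0:ℝ) < p := by exact_mod_cast Nat.pos_of_ne_zero (by omega)
  have hq0 : (0:ℝ) < ((2*p+1 : ℕ):ℝ) := by positivity
  have hIcc : rowF p (2*p+1) ((2*(p:ℝ)*p + 1)/(2*(p:ℝ)*(2*(p:ℝ)+1))) i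
      = Finset.Icc (max 1 (p - 2*i)) (min (2*p) (3*p - 2*i)) := by
    ext j
    simp only [mem_rowF, Finset.mem_Icc]
    set t : ℝ := (2*(p:ℝ)*p + 1)/(2*(p:ℝ)*(2*(p:ℝ)+1)) with ht
    have hP : (1:ℝ) ≤ (p:ℝ) := by exact_mod_cast Nat.one_le_iff_ne_zero.mpr (by omega)
    have hI1 : (1:ℝ) ≤ (i:ℝ) := by exact_mod_cast h1
    have hIp : (i:ℝ) ≤ (p:ℝ) - 1 := by
      have : (i+1 : ℕ) ≤ p := by omega
      have := (Nat.cast_le (α := ℝ)).mpr this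
      push_cast at this; linarith
    -- real ↔ integer translation of the two strict inequalities
    have key1 : (t < (i:ℝ)/p + (j:ℝ)/((2*p+1:ℕ):ℝ)) ↔ p*p < (2*p+1)*i + p*j := by
      rw [ht, div_add_div _ _ (ne_of_gt hp0) (ne_of_gt hq0),
        div_lt_div_iff₀ (by positivity) (by positivity)]
      push_cast
      constructor
      · intro h
        have hnat : (p*p : ℝ) < ((2*p+1)*i + p*j : ℕ) := by push_cast; nlinarith
        exact_mod_cast hnat
      · intro h
        have hr : ((p*p + 1 : ℕ) : ℝ) ≤ ((2*p+1)*i + p*j : ℕ) := by exact_mod_cast h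
        push_cast at hr
        nlinarith
    have key2 : ((i:ℝ)/p + (j:ℝ)/((2*p+1:ℕ):ℝ) < t + 1) ↔ (2*p+1)*i + p*j ≤ 3*p*p + p := by
      have ht1 : t + 1 = (2*(p:ℝ)*p + 1 + 2*(p:ℝ)*(2*(p:ℝ)+1)) / (2*(p:ℝ)*(2*(p:ℝ)+1)) := by
        rw [ht]; field_simp
      rw [ht1, div_add_div _ _ (ne_of_gt hp0) (ne_of_gt hq0),
        div_lt_div_iff₀ (by positivity) (by positivity)]
      push_cast
      constructor
      · intro h
        by_contra hcon
        push_neg at hcon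
        have hc : ((3*p*p + p + 1 : ℕ) : ℝ) ≤ (((2*p+1)*i + p*j : ℕ) : ℝ) := by
          exact_mod_cast hcon
        push_cast at hc
        nlinarith [mul_le_mul_of_nonneg_right hc
            (show (0:ℝ) ≤ 2*(p:ℝ)*(2*(p:ℝ)+1) by positivity),
          mul_pos hp0 (show (0:ℝ) < 2*(p:ℝ)+1 by positivity)]
      · intro h
        have hr : (((2*p+1)*i + p*j : ℕ) : ℝ) ≤ ((3*p*p + p : ℕ) : ℝ) := by exact_mod_cast h
        push_cast at hr
        nlinarith [mul_le_mul_of_nonneg_right hr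
            (show (0:ℝ) ≤ 2*(p:ℝ)*(2*(p:ℝ)+1) by positivity),
          mul_pos hp0 (show (0:ℝ) < 2*(p:ℝ)+1 by positivity)]
    rw [key1, key2]
    constructor
    · rintro ⟨hj0, hjq, hA, hB⟩
      refine ⟨?_, ?_⟩
      · -- max 1 (p - 2i) ≤ j
        rcases le_or_gt (p - 2*i) j with h | h
        · omega
        · exfalso
          have hj' : j + 1 ≤ p - 2*i := h
          have h2i : 2*i < p := by omega
          zify [h2i.le] at hj'
          zify at hA
          nlinarith [mul_le_mul_of_nonneg_left hj' (show (0:ℤ) ≤ (p:ℤ) by positivity)]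
      · -- j ≤ min (2p) (3p - 2i)
        rcases le_or_gt j (3*p - 2*i) with h | h
        · omega
        · exfalso
          have hj' : 3*p - 2*i + 1 ≤ j := h
          have h2i : 2*i ≤ 3*p := by omega
          zify [h2i] at hj'
          zify at hB
          nlinarith [mul_le_mul_of_nonneg_left hj' (show (0:ℤ) ≤ (p:ℤ) by positivity)]
    · rintro ⟨hlo, hhi⟩
      have hj0 : 0 < j := by omega
      have hjq : j < 2*p+1 := by omega
      refine ⟨hj0, hjq, ?_, ?_⟩
      · rcases le_or_gt p (2*i) with h | h
        · -- 2i ≥ p : automatic since j ≥ 1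
          zify at *
          nlinarith [mul_le_mul_of_nonneg_left h (show (0:ℤ) ≤ 2*(p:ℤ)+1 by positivity),
            mul_le_mul_of_nonneg_left hlo (show (0:ℤ) ≤ (p:ℤ) by positivity)]
        · -- 2i < p : use j ≥ p - 2i
          have hlo' : p - 2*i ≤ j := by omega
          zify [h.le] at hlo'
          zify at *
          nlinarith [mul_le_mul_of_nonneg_left hlo' (show (0:ℤ) ≤ (p:ℤ) by positivity)]
      · have hhi' : j ≤ 3*p - 2*i := by omega
        have h2i : 2*i ≤ 3*p := by omega
        zify [h2i] at hhi'
        zify at *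
        nlinarith [mul_le_mul_of_nonneg_left hhi' (show (0:ℤ) ≤ (p:ℤ) by positivity)]
  rw [hIcc, Nat.card_Icc]
  omega


lemma sum_rowF_reflect (p q : ℕ) (t : ℝ) :
    ∑ i ∈ Finset.Ico 1 p, (rowF p q t (p - i)).card
      = ∑ i ∈ Finset.Ico 1 p, (rowF p q t i).card := by
  apply Finset.sum_nbij' (i := fun a => p - a) (j := fun a => p - a)
  · intro a ha; simp only [Finset.mem_Ico] at *; omega
  · intro a ha; simp only [Finset.mem_Ico] at *; omega
  · intro a ha; simp only [Finset.mem_Ico] at ha; omega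
  · intro a ha; simp only [Finset.mem_Ico] at ha; omega
  · intro a ha; rfl

lemma twoN_le (p : ℕ) (hp : 0 < p) (t : ℝ) :
    2 * ∑ i ∈ Finset.Ico 1 p, (rowF p (2*p+1) t i).card ≤ 3*p*p - p - 2 := by
  have h2 : 2 * ∑ i ∈ Finset.Ico 1 p, (rowF p (2*p+1) t i).card
      = ∑ i ∈ Finset.Ico 1 p, ((rowF p (2*p+1) t i).card + (rowF p (2*p+1) t (p-i)).card) := by
    rw [Finset.sum_add_distrib, sum_rowF_reflect, two_mul]
  rw [h2, ← sum_m p hp]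
  apply Finset.sum_le_sum
  intro i hi
  simp only [Finset.mem_Ico] at hi
  rcases lt_trichotomy (2*i) p with h | h | h
  · have hb := pair_card_le p t i hi.1 h
    rw [if_neg (by omega)]
    have hmin : min i (p - i) = i := by omega
    omega
  · have hb1 := rowF_card_le p (2*p+1) t i
    have hb2 := rowF_card_le p (2*p+1) t (p-i)
    rw [if_pos (by omega)]
    have hmin : min i (p - i) = i := by omega
    omega
  · have hb := pair_card_le p t (p-i) (by omega) (by omega)
    have hpp : p - (p - i) = i := by omega
    rw [hpp] at hb
    rw [if_neg (by omega)]
    have hmin : min i (p - i) = p - i := by omega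
    omega

lemma twoN_eq (p : ℕ) (hp : 0 < p) :
    2 * ∑ i ∈ Finset.Ico 1 p,
        (rowF p (2*p+1) ((2*(p:ℝ)*p + 1)/(2*(p:ℝ)*(2*(p:ℝ)+1))) i).card
      = 3*p*p - p - 2 := by
  set t : ℝ := (2*(p:ℝ)*p + 1)/(2*(p:ℝ)*(2*(p:ℝ)+1)) with ht
  have h2 : 2 * ∑ i ∈ Finset.Ico 1 p, (rowF p (2*p+1) t i).card
      = ∑ i ∈ Finset.Ico 1 p, ((rowF p (2*p+1) t i).card + (rowF p (2*p+1) t (p-i)).card) := by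
    rw [Finset.sum_add_distrib, sum_rowF_reflect, two_mul]
  rw [h2, ← sum_m p hp]
  apply Finset.sum_congr rfl
  intro i hi
  simp only [Finset.mem_Ico] at hi
  rw [rowF_card_at_tstar p i hi.1 hi.2, rowF_card_at_tstar p (p-i) (by omega) (by omega)]
  have e1 : p - 2*(p - i) = 2*i - p := by omega
  have e2 : 3*p - 2*(p-i) = p + 2*i := by omega
  split <;> omega

theorem sigmaMax_p_two_p_add_one_value (p : ℕ) (hp : 0 < p) :
    sigmaMax p (2 * p + 1) = (p : ℤ) ^ 2 + p - 2 := by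
  have hP1 : (1:ℝ) ≤ (p:ℝ) := by exact_mod_cast hp
  have hp0 : (0:ℝ) < (p:ℝ) := by linarith
  have hsub : p + 2 ≤ 3*p*p := by nlinarith
  have hcast : ((3*p*p - p - 2 : ℕ) : ℤ) = 3*(p:ℤ)*p - p - 2 := by
    have : (3*p*p - p - 2 : ℕ) = 3*p*p - (p + 2) := by omega
    rw [this, Nat.cast_sub hsub]
    push_cast; ring
  -- upper bound
  have hub : ∀ z ∈ sigmaT p (2*p+1) '' Set.Ioo (0:ℝ) 1, z ≤ (p : ℤ) ^ 2 + p - 2 := by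
    rintro z ⟨t, _, rfl⟩
    have hb := twoN_le p hp t
    rw [← latticeCount_eq_sum] at hb
    have hbz : (2 * latticeCount p (2*p+1) t : ℤ) ≤ 3*(p:ℤ)*p - p - 2 := by
      rw [← hcast]
      exact_mod_cast hb
    rw [sigmaT]
    push_cast at hbz ⊢
    nlinarith [hbz]
  -- the point where the max is attained
  set tstar : ℝ := (2*(p:ℝ)*p + 1)/(2*(p:ℝ)*(2*(p:ℝ)+1)) with htstar
  have htmem : tstar ∈ Set.Ioo (0:ℝ) 1 := by
    constructor
    · apply div_pos <;> nlinarith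
    · rw [div_lt_one (by nlinarith)]
      nlinarith
  have hval : sigmaT p (2*p+1) tstar = (p : ℤ) ^ 2 + p - 2 := by
    have hb := twoN_eq p hp
    rw [← latticeCount_eq_sum] at hb
    rw [← htstar] at hb
    have hbz : (2 * latticeCount p (2*p+1) tstar : ℤ) = 3*(p:ℤ)*p - p - 2 := by
      rw [← hcast]
      exact_mod_cast hb
    rw [sigmaT]
    push_cast at hbz ⊢
    nlinarith [hbz]
  have hmem : (p : ℤ) ^ 2 + p - 2 ∈ sigmaT p (2*p+1) '' Set.Ioo (0:ℝ) 1 :=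
    ⟨tstar, htmem, hval⟩
  rw [sigmaMax]
  apply le_antisymm
  · exact csSup_le ⟨_, hmem⟩ hub
  · exact le_csSup ⟨(p : ℤ) ^ 2 + p - 2, fun z hz => hub z hz⟩ hmem
end

section
/- For every integer N there exist coprime integers 0 < p < q such that σ̂(p,q) − σ(p,q) ≥ N; that is, the difference between the maximum signature and the classical signature of torus knots is unbounded. -/
namespace SigmaAux

/-- The grid of relevant lattice points. -/
def grid (p q : ℕ) : Finset (ℕ × ℕ) := Finset.Ioo 0 p ×ˢ Finset.Ioo 0 q

/-- Integer version of the strip condition at parameter `t = a/(pq)`. -/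
def F (p q a : ℕ) : Finset (ℕ × ℕ) :=
  (grid p q).filter (fun ij => a < ij.1 * q + ij.2 * p ∧ ij.1 * q + ij.2 * p < a + p * q)

lemma real_cond_iff (p q a i j : ℕ) (hp : 0 < p) (hq : 0 < q) :
    ((a : ℝ) / (p * q) < (i : ℝ) / p + (j : ℝ) / q ∧
      (i : ℝ) / p + (j : ℝ) / q < (a : ℝ) / (p * q) + 1) ↔
    (a < i * q + j * p ∧ i * q + j * p < a + p * q) := by
  have hp' : (0 : ℝ) < p := by exact_mod_cast hp
  have hq' : (0 : ℝ) < q := by exact_mod_cast hq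
  have hpq : (0 : ℝ) < (p : ℝ) * q := by positivity
  have key : (i : ℝ) / p + (j : ℝ) / q = ((i * q + j * p : ℕ) : ℝ) / ((p : ℝ) * q) := by
    push_cast
    field_simp
    try ring
  have key2 : (a : ℝ) / (p * q) + 1 = ((a + p * q : ℕ) : ℝ) / ((p : ℝ) * q) := by
    push_cast
    try field_simp
    try ring
  rw [key, key2, div_lt_div_iff_of_pos_right hpq, div_lt_div_iff_of_pos_right hpq]
  exact_mod_cast Iff.rfl

lemma latticeCount_eq (p q a : ℕ) (hp : 0 < p) (hq : 0 < q) :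
    latticeCount p q ((a : ℝ) / (p * q)) = (F p q a).card := by
  rw [← Set.ncard_coe_finset]
  unfold latticeCount
  congr 1
  ext ⟨i, j⟩
  simp only [Set.mem_setOf_eq, F, grid, Finset.coe_filter, Finset.mem_product, Finset.mem_Ioo]
  constructor
  · rintro ⟨h1, h2, h3, h4, h5, h6⟩
    exact ⟨⟨⟨h1, h2⟩, ⟨h3, h4⟩⟩, (real_cond_iff p q a i j hp hq).mp ⟨h5, h6⟩⟩
  · rintro ⟨⟨⟨h1, h2⟩, ⟨h3, h4⟩⟩, hc⟩
    have h := (real_cond_iff p q a i j hp hq).mpr hc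
    exact ⟨h1, h2, h3, h4, h.1, h.2⟩

lemma latticeCount_le (p q : ℕ) (t : ℝ) : latticeCount p q t ≤ p * q := by
  unfold latticeCount
  have hsub : {ij : ℕ × ℕ | 0 < ij.1 ∧ ij.1 < p ∧ 0 < ij.2 ∧ ij.2 < q ∧
      t < (ij.1 : ℝ) / p + (ij.2 : ℝ) / q ∧ (ij.1 : ℝ) / p + (ij.2 : ℝ) / q < t + 1} ⊆
      ↑(grid p q) := by
    rintro ⟨i, j⟩ ⟨h1, h2, h3, h4, -, -⟩
    simp only [grid, Finset.coe_product, Set.mem_prod, Finset.mem_coe, Finset.mem_Ioo]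
    exact ⟨⟨h1, h2⟩, ⟨h3, h4⟩⟩
  calc Set.ncard _ ≤ Set.ncard (↑(grid p q) : Set (ℕ × ℕ)) :=
        Set.ncard_le_ncard hsub (Finset.finite_toSet _)
    _ = (grid p q).card := Set.ncard_coe_finset _
    _ ≤ p * q := by
        rw [grid, Finset.card_product, Nat.card_Ioo, Nat.card_Ioo]
        exact Nat.mul_le_mul (Nat.sub_le _ _) (Nat.sub_le _ _)

lemma bdd (p q : ℕ) : BddAbove (sigmaT p q '' Set.Ioo (0 : ℝ) 1) := by
  refine ⟨2 * (p * q : ℤ) + p + q, ?_⟩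
  rintro x ⟨t, -, rfl⟩
  have h1 : latticeCount p q t ≤ p * q := latticeCount_le p q t
  have h2 : (latticeCount p q t : ℤ) ≤ (p : ℤ) * q := by exact_mod_cast h1
  have hp : (0 : ℤ) ≤ (p : ℤ) := Int.natCast_nonneg p
  have hq : (0 : ℤ) ≤ (q : ℤ) := Int.natCast_nonneg q
  unfold sigmaT
  nlinarith [mul_nonneg hp hq]

lemma step (m i j : ℕ) (hm : 1 ≤ m) (hi : 0 < i) (hi2 : i < 2 * m) (hj : 0 < j)
    (hj2 : j < 2 * m + 1)
    (h1 : 2 * m ^ 2 + m < i * (2 * m + 1) + j * (2 * m))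
    (h2 : i * (2 * m + 1) + j * (2 * m) < 6 * m ^ 2 + 3 * m) :
    i * (2 * m + 1) + j * (2 * m) < 6 * m ^ 2 + 2 * m := by
  by_contra hcon
  push_neg at hcon
  have h3 : 3 * m + 1 ≤ i + j := by nlinarith
  have h4 : i + j ≤ 3 * m + 1 := by nlinarith
  have hij : i + j = 3 * m + 1 := le_antisymm h4 h3
  have hs : i * (2 * m + 1) + j * (2 * m) = 2 * m * (i + j) + i := by ring
  rw [hs, hij] at h2
  -- 2m(3m+1) + i < 6m^2 + 3m  ⟹  i < m, but j ≤ 2m forces i ≥ m+1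
  have hi' : m + 1 ≤ i := by omega
  nlinarith

lemma main_count (m : ℕ) (hm : 1 ≤ m) :
    (F (2 * m) (2 * m + 1) (2 * m ^ 2 + m)).card + (m - 1) ≤
      (F (2 * m) (2 * m + 1) (2 * m ^ 2)).card := by
  set D : Finset (ℕ × ℕ) := (Finset.Ico 1 m).image (fun i => (i, m - i)) with hD
  have hinj : Function.Injective (fun i : ℕ => (i, m - i)) := by
    intro a b h
    simpa using congrArg Prod.fst h
  have hDcard : D.card = m - 1 := by
    rw [hD, Finset.card_image_of_injective _ hinj, Nat.card_Ico]
  have memF : ∀ a i j : ℕ, (i, j) ∈ F (2 * m) (2 * m + 1) a ↔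
      (0 < i ∧ i < 2 * m) ∧ (0 < j ∧ j < 2 * m + 1) ∧
      a < i * (2 * m + 1) + j * (2 * m) ∧
      i * (2 * m + 1) + j * (2 * m) < a + (2 * m) * (2 * m + 1) := by
    intro a i j
    simp only [F, grid, Finset.mem_filter, Finset.mem_product, Finset.mem_Ioo]
    tauto
  have hsub1 : F (2 * m) (2 * m + 1) (2 * m ^ 2 + m) ⊆ F (2 * m) (2 * m + 1) (2 * m ^ 2) := by
    rintro ⟨i, j⟩ hmem
    rw [memF] at hmem
    obtain ⟨⟨hi, hi2⟩, ⟨hj, hj2⟩, hlo, hhi⟩ := hmem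
    rw [memF]
    refine ⟨⟨hi, hi2⟩, ⟨hj, hj2⟩, by nlinarith, ?_⟩
    have hhi' : i * (2 * m + 1) + j * (2 * m) < 6 * m ^ 2 + 3 * m := by nlinarith
    have := step m i j hm hi hi2 hj hj2 hlo hhi'
    nlinarith
  have hsub2 : D ⊆ F (2 * m) (2 * m + 1) (2 * m ^ 2) := by
    intro x hx
    rw [hD, Finset.mem_image] at hx
    obtain ⟨i, hi, rfl⟩ := hx
    rw [Finset.mem_Ico] at hi
    rw [memF]
    have hji : i + (m - i) = m := by omega
    have hs : i * (2 * m + 1) + (m - i) * (2 * m) = 2 * m * (i + (m - i)) + i := by ring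
    rw [hs, hji]
    constructor
    · omega
    constructor
    · omega
    constructor
    · nlinarith
    · nlinarith
  have hdisj : Disjoint (F (2 * m) (2 * m + 1) (2 * m ^ 2 + m)) D := by
    rw [Finset.disjoint_right]
    intro x hx hxF
    rw [hD, Finset.mem_image] at hx
    obtain ⟨i, hi, rfl⟩ := hx
    rw [Finset.mem_Ico] at hi
    rw [memF] at hxF
    obtain ⟨-, -, hlo, -⟩ := hxF
    have hji : i + (m - i) = m := by omega
    have hs : i * (2 * m + 1) + (m - i) * (2 * m) = 2 * m * (i + (m - i)) + i := by ring
    rw [hs, hji] at hlo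
    nlinarith
  calc (F (2 * m) (2 * m + 1) (2 * m ^ 2 + m)).card + (m - 1)
      = (F (2 * m) (2 * m + 1) (2 * m ^ 2 + m)).card + D.card := by rw [hDcard]
    _ = (F (2 * m) (2 * m + 1) (2 * m ^ 2 + m) ∪ D).card :=
        (Finset.card_union_of_disjoint hdisj).symm
    _ ≤ (F (2 * m) (2 * m + 1) (2 * m ^ 2)).card :=
        Finset.card_le_card (Finset.union_subset hsub1 hsub2)

end SigmaAux

theorem sigmaMax_sub_sigma_unbounded (N : ℤ) :
    ∃ p q : ℕ, 0 < p ∧ p < q ∧ Nat.Coprime p q ∧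
      N ≤ sigmaMax p q - sigmaClassical p q := by
  set m : ℕ := N.toNat + 1 with hm
  have hm1 : 1 ≤ m := by omega
  set p : ℕ := 2 * m with hp
  set q : ℕ := 2 * m + 1 with hq
  have hp0 : 0 < p := by omega
  have hq0 : 0 < q := by omega
  have hpq : p < q := by omega
  have hcop : Nat.Coprime p q :=
    Nat.coprime_self_add_right.mpr (Nat.coprime_one_right _)
  refine ⟨p, q, hp0, hpq, hcop, ?_⟩
  have hpqR : ((p : ℝ) * q) = (4 * m ^ 2 + 2 * m : ℕ) := by
    push_cast [hp, hq]; ring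
  -- the two parameter values
  have hhalf : (1 / 2 : ℝ) = ((2 * m ^ 2 + m : ℕ) : ℝ) / (p * q) := by
    rw [hpqR, eq_div_iff (by push_cast; positivity)]
    push_cast
    ring
  have c1eq : latticeCount p q (1 / 2) = (SigmaAux.F p q (2 * m ^ 2 + m)).card := by
    rw [hhalf]
    exact SigmaAux.latticeCount_eq p q _ hp0 hq0
  have c0eq : latticeCount p q (((2 * m ^ 2 : ℕ) : ℝ) / (p * q)) =
      (SigmaAux.F p q (2 * m ^ 2)).card := SigmaAux.latticeCount_eq p q _ hp0 hq0
  -- t0 lies in (0,1)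
  have ht0mem : ((2 * m ^ 2 : ℕ) : ℝ) / (p * q) ∈ Set.Ioo (0 : ℝ) 1 := by
    constructor
    · apply div_pos
      · push_cast; positivity
      · rw [hpqR]; push_cast; positivity
    · rw [div_lt_one (by rw [hpqR]; push_cast; positivity), hpqR]
      push_cast
      nlinarith [hm1, (by exact_mod_cast hm1 : (1 : ℝ) ≤ (m : ℝ))]
  have hle : sigmaT p q (((2 * m ^ 2 : ℕ) : ℝ) / (p * q)) ≤ sigmaMax p q :=
    le_csSup (SigmaAux.bdd p q) ⟨_, ht0mem, rfl⟩
  have hcount := SigmaAux.main_count m hm1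
  -- translate to integers
  have hcountZ : ((SigmaAux.F p q (2 * m ^ 2 + m)).card : ℤ) + (m - 1 : ℤ) ≤
      ((SigmaAux.F p q (2 * m ^ 2)).card : ℤ) := by
    have : ((m : ℤ) - 1) = ((m - 1 : ℕ) : ℤ) := by
      have : 1 ≤ m := hm1
      omega
    rw [this]
    exact_mod_cast hcount
  have hsig : sigmaT p q (1 / 2) + 2 * ((m : ℤ) - 1) ≤
      sigmaT p q (((2 * m ^ 2 : ℕ) : ℝ) / (p * q)) := by
    unfold sigmaT
    rw [c1eq, c0eq]
    linarith
  have hNm : N ≤ 2 * ((m : ℤ) - 1) := by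
    have h1 : N ≤ N.toNat := Int.self_le_toNat N
    have h2 : (m : ℤ) = (N.toNat : ℤ) + 1 := by exact_mod_cast hm
    omega
  unfold sigmaClassical
  linarith
end
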